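/- Let q : ℝ^(n×d) → ℝ^(n×d) be a permutation-equivariant bijection (i.e., q(Γx) = Γ q(x) for every permutation matrix Γ acting on rows) and let f : ℝ^(n×d) → ℝ be permutation invariant (f(Γz) = f(z) for all permutation matrices Γ). Then the function p(x) = |det Dq(x)| · f(q(x)) is permutation invariant: p(Γx) = p(x) for every permutation matrix Γ. -/

import Mathlib

/-- If `q` is a permutation-equivariant differentiable bijection of `ℝ^(n×d)`
(rows permuted) and `f` is permutation invariant, then
`p x = |det Dq(x)| * f (q x)` is permutation invariant. -/
theorem stmt_0 (n d : ℕ)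
    (q : (Fin n → Fin d → ℝ) → (Fin n → Fin d → ℝ))
    (f : (Fin n → Fin d → ℝ) → ℝ)
    (hq : Differentiable ℝ q)
    (hbij : Function.Bijective q)
    (heq : ∀ (π : Equiv.Perm (Fin n)) (x : Fin n → Fin d → ℝ), q (x ∘ π) = (q x) ∘ π)
    (hf : ∀ (π : Equiv.Perm (Fin n)) (z : Fin n → Fin d → ℝ), f (z ∘ π) = f z) :
    ∀ (π : Equiv.Perm (Fin n)) (x : Fin n → Fin d → ℝ),
      |LinearMap.det ((fderiv ℝ q (x ∘ π)).toLinearMap)| * f (q (x ∘ π))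
        = |LinearMap.det ((fderiv ℝ q x).toLinearMap)| * f (q x) := by
  intro π x
  set E : (Fin n → Fin d → ℝ) ≃L[ℝ] (Fin n → Fin d → ℝ) :=
    (LinearEquiv.funCongrLeft ℝ (Fin d → ℝ) π).toContinuousLinearEquiv with hE
  have hEapp : ∀ y : Fin n → Fin d → ℝ, E y = y ∘ π := fun y => rfl
  -- chain rule on both sides of q ∘ E = E ∘ q
  have h1 : HasFDerivAt (fun y => q (E y)) ((fderiv ℝ q (E x)).comp (E : _ →L[ℝ] _)) x :=
    (hq (E x)).hasFDerivAt.comp x E.hasFDerivAt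
  have h2 : HasFDerivAt (fun y => E (q y)) ((E : _ →L[ℝ] _).comp (fderiv ℝ q x)) x :=
    E.hasFDerivAt.comp x (hq x).hasFDerivAt
  have hfun : (fun y => q (E y)) = fun y => E (q y) := by
    funext y; rw [hEapp, hEapp, heq]
  rw [hfun] at h1
  have hkey : (fderiv ℝ q (E x)).comp (E : _ →L[ℝ] _)
      = (E : _ →L[ℝ] _).comp (fderiv ℝ q x) := h1.unique h2
  have hdetE : LinearMap.det ((E : (Fin n → Fin d → ℝ) →L[ℝ] (Fin n → Fin d → ℝ)) :
      (Fin n → Fin d → ℝ) →ₗ[ℝ] (Fin n → Fin d → ℝ)) ≠ 0 := by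
    have h := (LinearEquiv.isUnit_det' E.toLinearEquiv).ne_zero
    simpa using h
  have hdet : LinearMap.det ((fderiv ℝ q (E x)).toLinearMap)
      = LinearMap.det ((fderiv ℝ q x).toLinearMap) := by
    have := congrArg (fun L : (Fin n → Fin d → ℝ) →L[ℝ] (Fin n → Fin d → ℝ) =>
      LinearMap.det L.toLinearMap) hkey
    simp only [ContinuousLinearMap.toLinearMap_comp, LinearMap.det_comp] at this
    exact mul_right_cancel₀ hdetE (by rw [this, mul_comm])
  rw [← hEapp x] at *
  rw [hdet, hEapp, heq, hf]
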